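/- Let Y be a real-valued random variable and Z a random variable on a finite set, with joint distribution given by conditional densities p_{Y|Z}. Define f(s) := (s/(1+s)) I^↓_{1+s}(Y;Z) = log ∫ ( Σ_z P_Z(z) p_{Y|Z}(y|z)^{1+s} )^{1/(1+s)} dy for s > 0. Then lim_{s→0⁺} f(s)/s = I(Y;Z), the (Shannon) mutual information between Y and Z. -/

import Mathlib

open MeasureTheory Filter

open Finset in

private lemma mi_sum_pos {ι : Type*} {T : Finset ι} (hT : T.Nonempty) {a v : ι → ℝ}
    (ha : ∀ z ∈ T, 0 < a z) (hv : ∀ z ∈ T, 0 < v z) (r : ℝ) :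
    0 < ∑ z ∈ T, a z * v z ^ r :=
  Finset.sum_pos (fun z hz => mul_pos (ha z hz) (Real.rpow_pos_of_pos (hv z hz) r)) hT

private lemma mi_holder {ι : Type*} {T : Finset ι} (hT : T.Nonempty) {a v : ι → ℝ}
    (ha : ∀ z ∈ T, 0 < a z) (hv : ∀ z ∈ T, 0 < v z)
    {l m r₁ r₂ : ℝ} (hl : 0 ≤ l) (hm : 0 ≤ m) (hlm : l + m = 1) :
    ∑ z ∈ T, a z * v z ^ (l * r₁ + m * r₂)
      ≤ (∑ z ∈ T, a z * v z ^ r₁) ^ l * (∑ z ∈ T, a z * v z ^ r₂) ^ m := by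
  set M₁ := ∑ z ∈ T, a z * v z ^ r₁ with hM₁
  set M₂ := ∑ z ∈ T, a z * v z ^ r₂ with hM₂
  have hM₁0 : 0 < M₁ := mi_sum_pos hT ha hv r₁
  have hM₂0 : 0 < M₂ := mi_sum_pos hT ha hv r₂
  have key : ∀ z ∈ T, a z * v z ^ (l * r₁ + m * r₂)
      ≤ (M₁ ^ l * M₂ ^ m) * (a z * (l * (v z ^ r₁ / M₁) + m * (v z ^ r₂ / M₂))) := by
    intro z hz
    have hvz := hv z hz
    have hp₁ : (0:ℝ) < v z ^ r₁ := Real.rpow_pos_of_pos hvz r₁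
    have hp₂ : (0:ℝ) < v z ^ r₂ := Real.rpow_pos_of_pos hvz r₂
    have h1 : v z ^ (l * r₁ + m * r₂)
        = (v z ^ r₁ / M₁) ^ l * (v z ^ r₂ / M₂) ^ m * (M₁ ^ l * M₂ ^ m) := by
      rw [Real.rpow_add hvz, mul_comm l r₁, mul_comm m r₂,
        Real.rpow_mul hvz.le, Real.rpow_mul hvz.le,
        Real.div_rpow hp₁.le hM₁0.le, Real.div_rpow hp₂.le hM₂0.le]
      have h₁ : (M₁:ℝ) ^ l ≠ 0 := (Real.rpow_pos_of_pos hM₁0 l).ne'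
      have h₂ : (M₂:ℝ) ^ m ≠ 0 := (Real.rpow_pos_of_pos hM₂0 m).ne'
      field_simp
    have h2 : (v z ^ r₁ / M₁) ^ l * (v z ^ r₂ / M₂) ^ m
        ≤ l * (v z ^ r₁ / M₁) + m * (v z ^ r₂ / M₂) :=
      Real.geom_mean_le_arith_mean2_weighted hl hm (by positivity) (by positivity) hlm
    calc a z * v z ^ (l * r₁ + m * r₂)
        = (a z * ((v z ^ r₁ / M₁) ^ l * (v z ^ r₂ / M₂) ^ m)) * (M₁ ^ l * M₂ ^ m) := by
          rw [h1]; ring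
      _ ≤ (a z * (l * (v z ^ r₁ / M₁) + m * (v z ^ r₂ / M₂))) * (M₁ ^ l * M₂ ^ m) := by
          apply mul_le_mul_of_nonneg_right _ (by positivity)
          exact mul_le_mul_of_nonneg_left h2 (ha z hz).le
      _ = (M₁ ^ l * M₂ ^ m) * (a z * (l * (v z ^ r₁ / M₁) + m * (v z ^ r₂ / M₂))) := by ring
  calc ∑ z ∈ T, a z * v z ^ (l * r₁ + m * r₂)
      ≤ ∑ z ∈ T, (M₁ ^ l * M₂ ^ m) * (a z * (l * (v z ^ r₁ / M₁) + m * (v z ^ r₂ / M₂))) :=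
        Finset.sum_le_sum key
    _ = (M₁ ^ l * M₂ ^ m) * ((l / M₁) * ∑ z ∈ T, a z * v z ^ r₁
          + (m / M₂) * ∑ z ∈ T, a z * v z ^ r₂) := by
        rw [← Finset.mul_sum]
        congr 1
        rw [Finset.mul_sum, Finset.mul_sum, ← Finset.sum_add_distrib]
        exact Finset.sum_congr rfl fun z _ => by ring
    _ = M₁ ^ l * M₂ ^ m := by
        rw [← hM₁, ← hM₂]
        rw [div_mul_cancel₀ _ hM₁0.ne', div_mul_cancel₀ _ hM₂0.ne', hlm, mul_one]

private lemma mi_lower {ι : Type*} {T : Finset ι} (hT : T.Nonempty) {a v : ι → ℝ}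
    (ha : ∀ z ∈ T, 0 < a z) (hv : ∀ z ∈ T, 0 < v z)
    (hw : ∑ z ∈ T, a z ≤ 1) {s : ℝ} (hs : 0 ≤ s) :
    ∑ z ∈ T, a z * v z ≤ (∑ z ∈ T, a z * v z ^ (1 + s)) ^ (1 / (1 + s)) := by
  have h1s : (0:ℝ) < 1 + s := by linarith
  have h := mi_holder hT ha hv (l := s / (1 + s)) (m := 1 / (1 + s))
    (r₁ := 0) (r₂ := 1 + s) (by positivity) (by positivity)
    (by field_simp; ring)
  have he : s / (1 + s) * 0 + 1 / (1 + s) * (1 + s) = 1 := by field_simp; ring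
  rw [he] at h
  have h0 : ∀ z ∈ T, a z * v z ^ (0:ℝ) = a z := by
    intro z hz; rw [Real.rpow_zero, mul_one]
  rw [Finset.sum_congr rfl h0] at h
  have h1 : ∀ z ∈ T, a z * v z ^ (1:ℝ) = a z * v z := by
    intro z hz; rw [Real.rpow_one]
  rw [Finset.sum_congr rfl h1] at h
  have hw' : (∑ z ∈ T, a z) ^ (s / (1 + s)) ≤ 1 := by
    apply Real.rpow_le_one (Finset.sum_nonneg fun z hz => (ha z hz).le) hw (by positivity)
  calc ∑ z ∈ T, a z * v z
      ≤ (∑ z ∈ T, a z) ^ (s / (1 + s)) * (∑ z ∈ T, a z * v z ^ (1 + s)) ^ (1 / (1 + s)) := h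
    _ ≤ 1 * (∑ z ∈ T, a z * v z ^ (1 + s)) ^ (1 / (1 + s)) := by
        apply mul_le_mul_of_nonneg_right hw'
        exact Real.rpow_nonneg (Finset.sum_nonneg fun z hz =>
          (mul_pos (ha z hz) (Real.rpow_pos_of_pos (hv z hz) _)).le) _
    _ = (∑ z ∈ T, a z * v z ^ (1 + s)) ^ (1 / (1 + s)) := one_mul _

private lemma mi_upper {ι : Type*} {T : Finset ι} (hT : T.Nonempty) {a v : ι → ℝ}
    (ha : ∀ z ∈ T, 0 < a z) (hv : ∀ z ∈ T, 0 < v z)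
    (hw : ∑ z ∈ T, a z ≤ 1) {s : ℝ} (hs0 : 0 < s) (hs1 : s ≤ 1) :
    (∑ z ∈ T, a z * v z ^ (1 + s)) ^ (1 / (1 + s))
      ≤ (∑ z ∈ T, a z * v z)
        + 2 * s * ((∑ z ∈ T, a z * v z ^ (2:ℝ)) ^ (1 / (2:ℝ)) - ∑ z ∈ T, a z * v z) := by
  have h1s : (0:ℝ) < 1 + s := by linarith
  set B := ∑ z ∈ T, a z * v z with hBdef
  set A := (∑ z ∈ T, a z * v z ^ (2:ℝ)) ^ (1 / (2:ℝ)) with hAdef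
  have hB0 : 0 < B := Finset.sum_pos (fun z hz => mul_pos (ha z hz) (hv z hz)) hT
  have hA0 : 0 < A := Real.rpow_pos_of_pos (mi_sum_pos hT ha hv 2) _
  have hAB : B ≤ A := by
    have := mi_lower hT ha hv hw (s := 1) zero_le_one
    rw [show (1:ℝ) + 1 = 2 by norm_num] at this
    exact this
  -- Hölder : M(1+s) ≤ M(2)^s * M(1)^(1-s)
  have hhold := mi_holder hT ha hv (l := s) (m := 1 - s) (r₁ := 2) (r₂ := 1)
    hs0.le (by linarith) (by ring)
  rw [show s * 2 + (1 - s) * 1 = 1 + s by ring] at hhold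
  have h1 : ∀ z ∈ T, a z * v z ^ (1:ℝ) = a z * v z := fun z hz => by rw [Real.rpow_one]
  rw [Finset.sum_congr rfl h1] at hhold
  have hM1s : 0 < ∑ z ∈ T, a z * v z ^ (1 + s) := mi_sum_pos hT ha hv _
  have hM2 : 0 < ∑ z ∈ T, a z * v z ^ (2:ℝ) := mi_sum_pos hT ha hv _
  set θ : ℝ := 2 * s / (1 + s) with hθdef
  have hθ0 : 0 ≤ θ := by positivity
  have hθ1 : θ ≤ 1 := by rw [hθdef, div_le_one h1s]; linarith
  have hstep : (∑ z ∈ T, a z * v z ^ (1 + s)) ^ (1 / (1 + s)) ≤ A ^ θ * B ^ (1 - θ) := by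
    calc (∑ z ∈ T, a z * v z ^ (1 + s)) ^ (1 / (1 + s))
        ≤ ((∑ z ∈ T, a z * v z ^ (2:ℝ)) ^ s * B ^ (1 - s)) ^ (1 / (1 + s)) :=
          Real.rpow_le_rpow hM1s.le hhold (by positivity)
      _ = A ^ θ * B ^ (1 - θ) := by
          rw [Real.mul_rpow (Real.rpow_nonneg hM2.le _) (Real.rpow_nonneg hB0.le _),
            ← Real.rpow_mul hM2.le, ← Real.rpow_mul hB0.le, hAdef,
            ← Real.rpow_mul hM2.le]
          congr 2
          · rw [mul_comm, div_mul_eq_mul_div, one_div, mul_comm]; ring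
          · rw [eq_sub_iff_add_eq, mul_one_div, ← add_div,
              div_eq_one_iff_eq h1s.ne']; ring
  have hgeom : A ^ θ * B ^ (1 - θ) ≤ θ * A + (1 - θ) * B :=
    Real.geom_mean_le_arith_mean2_weighted hθ0 (by linarith) hA0.le hB0.le (by ring)
  have hθ2s : θ ≤ 2 * s := by
    rw [hθdef]; exact div_le_self (by positivity) (by linarith)
  have hmul : θ * (A - B) ≤ 2 * s * (A - B) :=
    mul_le_mul_of_nonneg_right hθ2s (sub_nonneg.mpr hAB)
  nlinarith [hstep, hgeom, hmul]

private lemma mi_deriv {ι : Type*} {T : Finset ι} (hT : T.Nonempty) {a v : ι → ℝ}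
    (ha : ∀ z ∈ T, 0 < a z) (hv : ∀ z ∈ T, 0 < v z) :
    HasDerivAt (fun s : ℝ => (∑ z ∈ T, a z * v z ^ (1 + s)) ^ (1 / (1 + s)))
      ((∑ z ∈ T, a z * (v z * Real.log (v z)))
        - (∑ z ∈ T, a z * v z) * Real.log (∑ z ∈ T, a z * v z)) 0 := by
  set B := ∑ z ∈ T, a z * v z with hBdef
  have hB0 : 0 < B := Finset.sum_pos (fun z hz => mul_pos (ha z hz) (hv z hz)) hT
  set N : ℝ → ℝ := fun s => ∑ z ∈ T, a z * Real.exp (Real.log (v z) * (1 + s)) with hNdef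
  have hNpos : ∀ s, 0 < N s := fun s =>
    Finset.sum_pos (fun z hz => mul_pos (ha z hz) (Real.exp_pos _)) hT
  have hN0 : N 0 = B := by
    rw [hNdef, hBdef]
    refine Finset.sum_congr rfl fun z hz => ?_
    rw [add_zero, mul_one, Real.exp_log (hv z hz)]
  set D := ∑ z ∈ T, a z * (v z * Real.log (v z)) with hDdef
  have hNderiv : HasDerivAt N D 0 := by
    rw [hNdef, hDdef]
    apply HasDerivAt.fun_sum
    intro z hz
    have h1 : HasDerivAt (fun s : ℝ => Real.log (v z) * (1 + s)) (Real.log (v z)) 0 := by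
      simpa using ((hasDerivAt_id (0:ℝ)).const_add 1).const_mul (Real.log (v z))
    have h3 := (h1.exp).const_mul (a z)
    rw [show a z * (v z * Real.log (v z)) = a z * (Real.exp (Real.log (v z) * (1 + 0)) * Real.log (v z)) by
      rw [add_zero, mul_one, Real.exp_log (hv z hz)]]
    exact h3
  have hinv : HasDerivAt (fun s : ℝ => (1 + s)⁻¹) (-1 : ℝ) 0 := by
    have h := ((hasDerivAt_id' (0:ℝ)).const_add 1).fun_inv (by norm_num)
    exact h.congr_deriv (by norm_num)
  have hlog : HasDerivAt (fun s => Real.log (N s)) (D / B) 0 := by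
    have h := hNderiv.log (hNpos 0).ne'
    rwa [hN0] at h
  have hmul := hlog.fun_mul hinv
  have hexp := hmul.exp
  have hfinal : HasDerivAt (fun s => Real.exp (Real.log (N s) * (1 + s)⁻¹))
      (D - B * Real.log B) 0 := by
    refine hexp.congr_deriv ?_
    rw [hN0, add_zero, inv_one, mul_one, Real.exp_log hB0]
    field_simp
    ring
  apply hfinal.congr_of_eventuallyEq
  have hmem : Set.Ioi (-1 : ℝ) ∈ nhds (0:ℝ) := isOpen_Ioi.mem_nhds (by norm_num)
  filter_upwards [hmem] with s hs
  have h1s : (0:ℝ) < 1 + s := by have := Set.mem_Ioi.mp hs; linarith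
  have hsum : ∑ z ∈ T, a z * v z ^ (1 + s) = N s := by
    rw [hNdef]
    refine Finset.sum_congr rfl fun z hz => ?_
    rw [Real.rpow_def_of_pos (hv z hz)]
  rw [hsum, Real.rpow_def_of_pos (hNpos s), one_div]

private lemma mi_slope {ι : Type*} {T : Finset ι} (hT : T.Nonempty) {a v : ι → ℝ}
    (ha : ∀ z ∈ T, 0 < a z) (hv : ∀ z ∈ T, 0 < v z) :
    Tendsto (fun s : ℝ =>
        ((∑ z ∈ T, a z * v z ^ (1 + s)) ^ (1 / (1 + s)) - ∑ z ∈ T, a z * v z) / s)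
      (nhdsWithin 0 (Set.Ioi 0))
      (nhds ((∑ z ∈ T, a z * (v z * Real.log (v z)))
        - (∑ z ∈ T, a z * v z) * Real.log (∑ z ∈ T, a z * v z))) := by
  have h := hasDerivAt_iff_tendsto_slope.mp (mi_deriv hT ha hv)
  have h2 := h.mono_left (nhdsWithin_mono 0 (fun x hx => ne_of_gt hx : Set.Ioi (0:ℝ) ⊆ {0}ᶜ))
  have hf0 : (∑ z ∈ T, a z * v z ^ ((1:ℝ) + 0)) ^ (1 / ((1:ℝ) + 0)) = ∑ z ∈ T, a z * v z := by
    norm_num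
  apply h2.congr
  intro s
  rw [slope_def_field, hf0, sub_zero]


theorem stmt4 {Z : Type*} [Fintype Z]
    (P : Z → ℝ) (hP0 : ∀ z, 0 ≤ P z) (hP1 : ∑ z, P z = 1)
    (p : Z → ℝ → ℝ) (hp0 : ∀ z y, 0 ≤ p z y) (hpm : ∀ z, Measurable (p z))
    (hpb : ∀ z, ∃ C, ∀ y, p z y ≤ C)
    (hpd : ∀ z, ∫ y : ℝ, p z y = 1)
    (hint : ∀ s ∈ Set.Ioc (0:ℝ) 1,
      Integrable (fun y : ℝ => (∑ z, P z * (p z y) ^ (1 + s)) ^ (1 / (1 + s))))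
    (hMI : Integrable (fun y : ℝ =>
      ∑ z, P z * p z y * Real.log (p z y / ∑ z', P z' * p z' y))) :
    Tendsto
      (fun s : ℝ =>
        Real.log (∫ y : ℝ, (∑ z, P z * (p z y) ^ (1 + s)) ^ (1 / (1 + s))) / s)
      (nhdsWithin 0 (Set.Ioi 0))
      (nhds (∫ y : ℝ, ∑ z, P z * p z y * Real.log (p z y / ∑ z', P z' * p z' y))) := by
  classical
  set l := nhdsWithin (0:ℝ) (Set.Ioi 0) with hl
  set S : ℝ → ℝ := fun y => ∑ z, P z * p z y with hS
  set G : ℝ → ℝ → ℝ := fun s y => (∑ z, P z * p z y ^ (1 + s)) ^ (1 / (1 + s)) with hG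
  set m : ℝ → ℝ := fun y => ∑ z, P z * p z y * Real.log (p z y / ∑ z', P z' * p z' y) with hm
  show Tendsto (fun s => Real.log (∫ y, G s y) / s) l (nhds (∫ y, m y))
  set Ty : ℝ → Finset Z := fun y => Finset.univ.filter (fun z => 0 < P z ∧ 0 < p z y) with hTy
  have hTa : ∀ y, ∀ z ∈ Ty y, 0 < P z := fun y z hz => (Finset.mem_filter.mp hz).2.1
  have hTv : ∀ y, ∀ z ∈ Ty y, 0 < p z y := fun y z hz => (Finset.mem_filter.mp hz).2.2
  have hTw : ∀ y, ∑ z ∈ Ty y, P z ≤ 1 := by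
    intro y
    rw [← hP1]
    exact Finset.sum_le_sum_of_subset_of_nonneg (Finset.filter_subset _ _)
      (fun z _ _ => hP0 z)
  have hgsum : ∀ (y : ℝ) (s : ℝ), 0 ≤ s →
      (∑ z, P z * p z y ^ (1 + s)) = ∑ z ∈ Ty y, P z * p z y ^ (1 + s) := by
    intro y s hs
    rw [hTy]
    refine (Finset.sum_filter_of_ne ?_).symm
    intro z _ hne
    constructor
    · rcases (hP0 z).lt_or_eq with h | h
      · exact h
      · exact absurd (by rw [← h, zero_mul]) hne
    · rcases (hp0 z y).lt_or_eq with h | h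
      · exact h
      · refine absurd ?_ hne
        rw [← h, Real.zero_rpow (by linarith : (1:ℝ) + s ≠ 0), mul_zero]
  have hSsum : ∀ y, S y = ∑ z ∈ Ty y, P z * p z y := by
    intro y
    rw [hS, hTy]
    refine (Finset.sum_filter_of_ne ?_).symm
    intro z _ hne
    constructor
    · rcases (hP0 z).lt_or_eq with h | h
      · exact h
      · exact absurd (by rw [← h, zero_mul]) hne
    · rcases (hp0 z y).lt_or_eq with h | h
      · exact h
      · exact absurd (by rw [← h, mul_zero]) hne
  have hempty : ∀ y, ¬ (Ty y).Nonempty → (∀ z : Z, P z * p z y = 0) := by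
    intro y h z
    by_contra hzero
    rcases mul_ne_zero_iff.mp hzero with ⟨h1, h2⟩
    exact h ⟨z, Finset.mem_filter.mpr ⟨Finset.mem_univ z,
      ⟨(hP0 z).lt_of_ne' h1, (hp0 z y).lt_of_ne' h2⟩⟩⟩
  have hSz : ∀ y, ¬ (Ty y).Nonempty → S y = 0 := by
    intro y h
    rw [hS]
    exact Finset.sum_eq_zero fun z _ => hempty y h z
  have hGz : ∀ (y t : ℝ), 0 < t → ¬ (Ty y).Nonempty → G t y = 0 := by
    intro y t ht h
    rw [hG]
    simp only
    have hsum0 : (∑ z, P z * p z y ^ (1 + t)) = 0 := by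
      apply Finset.sum_eq_zero
      intro z _
      rcases mul_eq_zero.mp (hempty y h z) with h1 | h1
      · rw [h1, zero_mul]
      · rw [h1, Real.zero_rpow (by linarith : (1:ℝ) + t ≠ 0), mul_zero]
    rw [hsum0, Real.zero_rpow (ne_of_gt (by positivity))]
  have key : ∀ (y : ℝ) (s : ℝ), 0 < s → s ≤ 1 →
      S y ≤ G s y ∧ G s y - S y ≤ 2 * s * (G 1 y - S y) := by
    intro y s hs0 hs1
    by_cases hne : (Ty y).Nonempty
    · have hGs : G s y = (∑ z ∈ Ty y, P z * p z y ^ (1 + s)) ^ (1 / (1 + s)) := by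
        rw [hG]; simp only; rw [hgsum y s hs0.le]
      have hG1 : G 1 y = (∑ z ∈ Ty y, P z * p z y ^ (2:ℝ)) ^ (1 / (2:ℝ)) := by
        rw [hG]; simp only; rw [hgsum y 1 zero_le_one,
          show (1:ℝ) + 1 = 2 by norm_num]
      constructor
      · rw [hGs, hSsum y]
        exact mi_lower hne (hTa y) (hTv y) (hTw y) hs0.le
      · rw [hGs, hG1, hSsum y]
        have h := mi_upper hne (hTa y) (hTv y) (hTw y) hs0 hs1
        linarith
    · rw [hSz y hne, hGz y s hs0 hne, hGz y 1 zero_lt_one hne]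
      norm_num
  have hlim : ∀ y : ℝ, Tendsto (fun s => (G s y - S y) / s) l (nhds (m y)) := by
    intro y
    by_cases hne : (Ty y).Nonempty
    · have hSpos : 0 < ∑ z ∈ Ty y, P z * p z y :=
        Finset.sum_pos (fun z hz => mul_pos (hTa y z hz) (hTv y z hz)) hne
      have hSy2 : (∑ z', P z' * p z' y) = ∑ z ∈ Ty y, P z * p z y :=
        (show (∑ z', P z' * p z' y) = S y from rfl).trans (hSsum y)
      have hmval : m y = (∑ z ∈ Ty y, P z * (p z y * Real.log (p z y)))
          - (∑ z ∈ Ty y, P z * p z y) * Real.log (∑ z ∈ Ty y, P z * p z y) := by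
        rw [hm]
        simp only [hSy2]
        have hrestrict : (∑ z, P z * p z y * Real.log (p z y / ∑ z ∈ Ty y, P z * p z y))
            = ∑ z ∈ Ty y, P z * p z y * Real.log (p z y / ∑ z ∈ Ty y, P z * p z y) := by
          conv_lhs => rw [hTy]
          refine (Finset.sum_filter_of_ne ?_).symm
          intro z _ hne'
          constructor
          · rcases (hP0 z).lt_or_eq with h | h
            · exact h
            · exact absurd (by rw [← h, zero_mul, zero_mul]) hne'
          · rcases (hp0 z y).lt_or_eq with h | h
            · exact h
            · exact absurd (by rw [← h, mul_zero, zero_mul]) hne'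
        rw [hrestrict]
        have hterm : ∀ z ∈ Ty y,
            P z * p z y * Real.log (p z y / ∑ z ∈ Ty y, P z * p z y)
              = P z * (p z y * Real.log (p z y))
                - P z * p z y * Real.log (∑ z ∈ Ty y, P z * p z y) := by
          intro z hz
          rw [Real.log_div (hTv y z hz).ne' hSpos.ne']
          ring
        rw [Finset.sum_congr rfl hterm, Finset.sum_sub_distrib, ← Finset.sum_mul]
      rw [hmval]
      have h := mi_slope hne (hTa y) (hTv y)
      apply Filter.Tendsto.congr' _ h
      filter_upwards [self_mem_nhdsWithin] with s hs
      have hs0 : (0:ℝ) < s := hs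
      rw [← hgsum y s hs0.le, ← hSsum y]
    · have hm0 : m y = 0 := by
        rw [hm]
        exact Finset.sum_eq_zero fun z _ => by rw [hempty y hne z, zero_mul]
      rw [hm0]
      apply Filter.Tendsto.congr' _ tendsto_const_nhds
      filter_upwards [self_mem_nhdsWithin] with s hs
      rw [hGz y s hs hne, hSz y hne, sub_zero, zero_div]
  have hpint : ∀ z, Integrable (p z) := by
    intro z
    by_contra h
    exact one_ne_zero ((hpd z).symm.trans (integral_undef h))
  have hSint : Integrable S := by
    rw [hS]
    exact integrable_finset_sum _ fun z _ => (hpint z).const_mul (P z)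
  have hGint : ∀ s ∈ Set.Ioc (0:ℝ) 1, Integrable (G s) := fun s hs => hint s hs
  have hG1int : Integrable (G 1) := hGint 1 ⟨zero_lt_one, le_refl 1⟩
  have hIoc : Set.Ioc (0:ℝ) 1 ∈ l := Ioc_mem_nhdsGT_of_mem ⟨le_refl 0, zero_lt_one⟩
  have hDCT : Tendsto (fun s => ∫ y, (G s y - S y) / s) l (nhds (∫ y, m y)) := by
    apply tendsto_integral_filter_of_dominated_convergence (fun y => 2 * (G 1 y - S y))
    · filter_upwards [hIoc] with s hs
      exact (((hGint s hs).sub hSint).div_const s).aestronglyMeasurable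
    · filter_upwards [hIoc] with s hs
      apply ae_of_all
      intro y
      have hk := key y s hs.1 hs.2
      rw [Real.norm_eq_abs, abs_of_nonneg (div_nonneg (by linarith [hk.1]) hs.1.le),
        div_le_iff₀ hs.1]
      calc G s y - S y ≤ 2 * s * (G 1 y - S y) := hk.2
        _ = 2 * (G 1 y - S y) * s := by ring
    · exact (hG1int.sub hSint).const_mul 2
    · exact ae_of_all _ hlim
  have hSone : ∫ y, S y = 1 := by
    rw [hS, integral_finset_sum Finset.univ (fun z _ => (hpint z).const_mul (P z))]
    have hz : ∀ z ∈ Finset.univ, (∫ y, P z * p z y) = P z := fun z _ => by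
      rw [integral_const_mul, hpd z, mul_one]
    rw [Finset.sum_congr rfl hz, hP1]
  have hFq : Tendsto (fun s => ((∫ y, G s y) - 1) / s) l (nhds (∫ y, m y)) := by
    apply Filter.Tendsto.congr' _ hDCT
    filter_upwards [hIoc] with s hs
    rw [integral_div, integral_sub (hGint s hs) hSint, hSone]
  have hid : Tendsto (fun s : ℝ => s) l (nhds 0) := tendsto_id.mono_right nhdsWithin_le_nhds
  have hx : Tendsto (fun s => (∫ y, G s y) - 1) l (nhds 0) := by
    have h := hFq.mul hid
    rw [mul_zero] at h
    apply Filter.Tendsto.congr' _ h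
    filter_upwards [self_mem_nhdsWithin] with s hs
    exact div_mul_cancel₀ _ (ne_of_gt hs)
  set L : ℝ → ℝ := fun x => if x = 0 then 1 else Real.log (1 + x) / x with hLdef
  have hL0 : Tendsto L (nhds 0) (nhds 1) := by
    have hd : HasDerivAt (fun x : ℝ => Real.log (1 + x)) 1 0 := by
      have h := ((hasDerivAt_id' (0:ℝ)).const_add 1).log (by norm_num)
      exact h.congr_deriv (by norm_num)
    have hslope := hasDerivAt_iff_tendsto_slope.mp hd
    rw [← nhdsNE_sup_pure (0:ℝ), tendsto_sup]
    constructor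
    · apply Filter.Tendsto.congr' _ hslope
      filter_upwards [self_mem_nhdsWithin] with x hx
      have hx' : x ≠ 0 := hx
      rw [slope_def_field, hLdef]
      simp only
      rw [if_neg hx']
      norm_num
    · have h := tendsto_pure_nhds L 0
      have hL1 : L 0 = 1 := by rw [hLdef]; simp
      rwa [hL1] at h
  have hLc : Tendsto (fun s => L ((∫ y, G s y) - 1)) l (nhds 1) := hL0.comp hx
  have hfin := hFq.mul hLc
  rw [mul_one] at hfin
  apply Filter.Tendsto.congr' _ hfin
  filter_upwards [self_mem_nhdsWithin] with s hs
  have hs0 : (0:ℝ) < s := hs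
  by_cases hzero : (∫ y, G s y) - 1 = 0
  · have hF1 : (∫ y, G s y) = 1 := by linarith [hzero]
    rw [hLdef]
    simp only
    rw [if_pos hzero, hzero, hF1, Real.log_one, zero_div, zero_mul]
  · rw [hLdef]
    simp only
    rw [if_neg hzero, show 1 + ((∫ y, G s y) - 1) = ∫ y, G s y by ring]
    field_simp
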